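/- Let n ≥ 1, let A be an n×n complex matrix, and let t ∈ ℂ with rank(A − t·I) ≤ 1. Then there exist a unitary matrix U ∈ U(n) and a matrix S ∈ M_n(ℂ) with rank(S) ≤ 1 such that A = S + t·U E₁ U^{−1}, where E₁ = diag(1, …, 1, 1−n) is the n×n diagonal matrix with first n−1 diagonal entries 1 and last diagonal entry 1−n. -/

import Mathlib

open Matrix Finset Module

theorem decomposition_rank_one_plus_conjugate (n : ℕ) (hn : 1 ≤ n)
    (A : Matrix (Fin n) (Fin n) ℂ) (t : ℂ)
    (h : (A - t • (1 : Matrix (Fin n) (Fin n) ℂ)).rank ≤ 1) :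
    ∃ U ∈ Matrix.unitaryGroup (Fin n) ℂ, ∃ S : Matrix (Fin n) (Fin n) ℂ,
      S.rank ≤ 1 ∧
      A = S + t • (U * Matrix.diagonal
        (fun i : Fin n => if (i : ℕ) = n - 1 then 1 - (n : ℂ) else 1) * U⁻¹) := by
  classical
  set B := A - t • (1 : Matrix (Fin n) (Fin n) ℂ) with hBdef
  set W : Submodule ℂ (Fin n → ℂ) := Submodule.span ℂ (Set.range Bᵀ) with hWdef
  have hW1 : Module.rank ℂ W ≤ 1 := by
    rw [← W.finrank_eq_rank]
    exact_mod_cast (B.rank_eq_finrank_span_cols ▸ h : finrank ℂ W ≤ 1)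
  obtain ⟨v₀, -, hv₀⟩ := (rank_submodule_le_one_iff W).mp hW1
  set i0 : Fin n := ⟨n - 1, by omega⟩ with hi0
  -- the unit vector w (in EuclideanSpace) spanning the column space
  set v₁ : EuclideanSpace ℂ (Fin n) := WithLp.toLp 2 v₀ with hv₁def
  set w : EuclideanSpace ℂ (Fin n) := if h0 : v₀ = 0 then EuclideanSpace.single i0 1
    else ((‖v₁‖⁻¹ : ℝ) : ℂ) • v₁ with hwdef
  have hwnorm : ‖w‖ = 1 := by
    rw [hwdef]
    split_ifs with h0
    · simp [EuclideanSpace.norm_single]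
    · have hne : ‖v₁‖ ≠ 0 := norm_ne_zero_iff.mpr (show v₁ ≠ 0 from fun h1 => h0 (congrArg WithLp.ofLp h1))
      rw [norm_smul, Complex.norm_real, norm_inv, norm_norm, inv_mul_cancel₀ hne]
  set w' : Fin n → ℂ := fun i => w i with hw'def
  have hspan : W ≤ Submodule.span ℂ {w'} := by
    refine hv₀.trans ?_
    rw [Submodule.span_le, Set.singleton_subset_iff]
    by_cases h0 : v₀ = 0
    · rw [h0]; exact Submodule.zero_mem _
    · refine Submodule.mem_span_singleton.mpr ⟨((‖v₁‖ : ℝ) : ℂ), ?_⟩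
      have hne : ((‖v₁‖ : ℝ) : ℂ) ≠ 0 := by
        exact_mod_cast norm_ne_zero_iff.mpr (show v₁ ≠ 0 from fun h1 => h0 (congrArg WithLp.ofLp h1))
      have hww : w' = ((‖v₁‖⁻¹ : ℝ) : ℂ) • v₀ := by
        funext i; simp [hw'def, hwdef, h0, hv₁def]
      rw [hww, smul_smul, Complex.ofReal_inv, mul_inv_cancel₀ hne, one_smul]
  -- extend w to an orthonormal basis
  have hcard : finrank ℂ (EuclideanSpace ℂ (Fin n)) = Fintype.card (Fin n) := by
    simp [finrank_euclideanSpace]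
  have horth : Orthonormal ℂ (({i0} : Set (Fin n)).restrict (fun _ => w)) := by
    rw [orthonormal_iff_ite]
    rintro ⟨i, hi⟩ ⟨j, hj⟩
    simp only [Set.mem_singleton_iff] at hi hj
    subst hi; subst hj
    simp [Set.restrict, inner_self_eq_norm_sq_to_K, hwnorm]
  obtain ⟨b, hb⟩ := horth.exists_orthonormalBasis_extension_of_card_eq hcard
  have hbw : b i0 = w := hb i0 rfl
  set U : Matrix (Fin n) (Fin n) ℂ := Matrix.of fun i k => b k i with hUdef
  have hUU : star U * U = 1 := by
    ext i j
    have := (orthonormal_iff_ite.mp b.orthonormal) i j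
    rw [PiLp.inner_apply] at this
    simp only [RCLike.inner_apply, starRingEnd_apply] at this
    simp only [Matrix.mul_apply, Matrix.star_apply, hUdef, Matrix.of_apply, Matrix.one_apply,
      Matrix.conjTranspose_apply]
    simpa [mul_comm] using this
  have hUmem : U ∈ Matrix.unitaryGroup (Fin n) ℂ := mem_unitaryGroup_iff'.mpr hUU
  have hUU' : U * star U = 1 := mem_unitaryGroup_iff.mp hUmem
  have hUinv : U⁻¹ = star U := Matrix.inv_eq_left_inv hUU
  set D : Matrix (Fin n) (Fin n) ℂ :=
    Matrix.diagonal (fun i : Fin n => if (i : ℕ) = n - 1 then 1 - (n : ℂ) else 1) with hDdef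
  -- compute the conjugated matrix entrywise
  have hM : ∀ i j, (U * D * U⁻¹) i j
      = (1 : Matrix (Fin n) (Fin n) ℂ) i j - (n : ℂ) * w' i * star (w' j) := by
    intro i j
    rw [hUinv, Matrix.mul_apply]
    have key : ∀ k, (U * D) i k * (star U) k j
        = U i k * star (U j k)
          - (if k = i0 then (n : ℂ) * U i i0 * star (U j i0) else 0) := by
      intro k
      rw [Matrix.mul_diagonal]
      simp only [Matrix.star_apply, Matrix.conjTranspose_apply, hDdef]
      by_cases hk : k = i0
      · subst hk
        simp only [hi0, if_pos rfl]
        push_cast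
        ring
      · have hne : ¬ ((k : ℕ) = n - 1) := fun hkk => hk (Fin.ext hkk)
        simp only [if_neg hne, if_neg hk]
        ring
    rw [Finset.sum_congr rfl (fun k _ => key k), Finset.sum_sub_distrib,
      Finset.sum_ite_eq' Finset.univ i0, if_pos (Finset.mem_univ i0)]
    have h1 : ∑ k, U i k * star (U j k) = (U * star U) i j := by
      simp [Matrix.mul_apply, Matrix.star_apply, Matrix.conjTranspose_apply]
    rw [h1, hUU']
    have hUi : U i i0 = w' i := by simp [hUdef, hbw, hw'def]
    have hUj : U j i0 = w' j := by simp [hUdef, hbw, hw'def]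
    rw [hUi, hUj]
  refine ⟨U, hUmem, A - t • (U * D * U⁻¹), ?_, by abel⟩
  -- rank bound for S
  have hScol : ∀ j, (A - t • (U * D * U⁻¹))ᵀ j ∈ Submodule.span ℂ {w'} := by
    intro j
    have hcol : (A - t • (U * D * U⁻¹))ᵀ j
        = Bᵀ j + (t * n * star (w' j)) • w' := by
      funext i
      simp only [Matrix.transpose_apply, Matrix.sub_apply, Matrix.smul_apply, hM i j,
        Pi.add_apply, Pi.smul_apply, hBdef, smul_eq_mul]
      simp only [Matrix.sub_apply, Matrix.smul_apply, Matrix.one_apply, smul_eq_mul]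
      ring
    rw [hcol]
    exact Submodule.add_mem _
      (hspan (Submodule.subset_span (Set.mem_range_self j)))
      (Submodule.smul_mem _ _ (Submodule.mem_span_singleton_self _))
  rw [Matrix.rank_eq_finrank_span_cols]
  calc finrank ℂ (Submodule.span ℂ (Set.range (A - t • (U * D * U⁻¹))ᵀ))
      ≤ finrank ℂ (Submodule.span ℂ {w'}) := by
        apply Submodule.finrank_mono
        rw [Submodule.span_le]
        rintro _ ⟨j, rfl⟩
        exact hScol j
    _ ≤ 1 := by
        by_cases hw0 : w' = 0
        · rw [hw0, Submodule.span_zero_singleton]; simp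
        · rw [finrank_span_singleton hw0]
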